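/- arXiv:2108.08198 — 3 statements merged into one kernel-verified Lean document; each statement's English description precedes it below -/
import Mathlib

section
/- PAC-Bayes deviation inequality: Let X₁,…,Xₙ be i.i.d. random variables on a space 𝒳, Θ ⊆ ℝ^p a parameter space with a prior probability measure μ, and f : 𝒳 × Θ → ℝ measurable with E_X[exp(f(X,θ))] < ∞ for all θ. Then with probability at least 1 − exp(−t), simultaneously for all probability measures ρ ≪ μ on Θ: (1/n)∑_{i=1}^n E_ρ[f(X_i, θ)] ≤ E_ρ[log E_X[exp(f(X, θ))]] + (KL(ρ, μ) + t)/n. -/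
open MeasureTheory ProbabilityTheory Real

/-- Product of lintegrals for independent ℝ≥0∞-valued functions. -/
lemma aux_lintegral_prod {Ω : Type*} [MeasurableSpace Ω] (P : Measure Ω) [IsProbabilityMeasure P]
    {n : ℕ} (Y : Fin n → Ω → ENNReal) (hY : ∀ i, Measurable (Y i))
    (hind : iIndepFun Y P) (s : Finset (Fin n)) :
    ∫⁻ ω, ∏ i ∈ s, Y i ω ∂P = ∏ i ∈ s, ∫⁻ ω, Y i ω ∂P := by
  classical
  induction s using Finset.induction with
  | empty => simp
  | @insert a s ha ih =>
    have hprod : Measurable (fun ω => ∏ i ∈ s, Y i ω) :=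
      Finset.measurable_prod _ fun i _ => hY i
    have hIndep : IndepFun (fun ω => ∏ i ∈ s, Y i ω) (Y a) P := by
      have h := hind.indepFun_finsetProd_of_notMem hY ha
      have heq : (∏ j ∈ s, Y j) = fun ω => ∏ i ∈ s, Y i ω :=
        funext fun ω => Finset.prod_apply ω s Y
      rwa [heq] at h
    simp only [Finset.prod_insert ha]
    rw [← ih]
    have := lintegral_mul_eq_lintegral_mul_lintegral_of_indepFun
      hprod (hY a) hIndep
    calc ∫⁻ ω, Y a ω * ∏ i ∈ s, Y i ω ∂P
        = ∫⁻ ω, (∏ i ∈ s, Y i ω) * Y a ω ∂P := by simp [mul_comm]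
      _ = (∫⁻ ω, ∏ i ∈ s, Y i ω ∂P) * ∫⁻ ω, Y a ω ∂P := this
      _ = (∫⁻ ω, Y a ω ∂P) * ∫⁻ ω, ∏ i ∈ s, Y i ω ∂P := mul_comm _ _

/-- Change of measure / Donsker–Varadhan style inequality. -/
lemma aux_change_of_measure {T : Type*} [MeasurableSpace T]
    (μ ρ : Measure T) [IsProbabilityMeasure μ] [IsProbabilityMeasure ρ]
    (hρμ : ρ ≪ μ) (g : T → ℝ) (hg : Measurable g)
    (hgi : Integrable g ρ)
    (hkl : Integrable (fun θ => Real.log ((ρ.rnDeriv μ θ).toReal)) ρ)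
    {B : ℝ} (hB : 0 < B)
    (hbound : ∫⁻ θ, ENNReal.ofReal (Real.exp (g θ)) ∂μ ≤ ENNReal.ofReal B) :
    ∫ θ, g θ ∂ρ ≤ Real.log B + ∫ θ, Real.log ((ρ.rnDeriv μ θ).toReal) ∂ρ := by
  set D := ρ.rnDeriv μ with hD_def
  have hD : Measurable D := Measure.measurable_rnDeriv ρ μ
  set h : T → ℝ := fun θ => g θ - Real.log ((D θ).toReal) with hh_def
  have hh_meas : Measurable h := hg.sub (hD.ennreal_toReal.log)
  have hwd : μ.withDensity D = ρ := Measure.withDensity_rnDeriv_eq ρ μ hρμ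
  -- key lintegral bound
  have hkey : ∫⁻ θ, ENNReal.ofReal (Real.exp (h θ)) ∂ρ ≤ ENNReal.ofReal B := by
    have h1 : ∫⁻ θ, ENNReal.ofReal (Real.exp (h θ)) ∂ρ
        = ∫⁻ θ, D θ * ENNReal.ofReal (Real.exp (h θ)) ∂μ := by
      have hmeas2 : Measurable fun θ => ENNReal.ofReal (Real.exp (h θ)) :=
        (hh_meas.exp).ennreal_ofReal
      conv_lhs => rw [← hwd]
      rw [lintegral_withDensity_eq_lintegral_mul₀' hD.aemeasurable
        (by rw [hwd]; exact hmeas2.aemeasurable)]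
      simp only [Pi.mul_apply]
    have h2 : ∀ᵐ θ ∂μ, D θ * ENNReal.ofReal (Real.exp (h θ))
        ≤ ENNReal.ofReal (Real.exp (g θ)) := by
      filter_upwards [Measure.rnDeriv_lt_top ρ μ] with θ hlt
      rw [← hD_def] at hlt
      rcases eq_or_ne (D θ) 0 with h0 | h0
      · simp [h0]
      · have hd : 0 < (D θ).toReal := ENNReal.toReal_pos h0 hlt.ne
        have hexp_eq : Real.exp (h θ) = Real.exp (g θ) / (D θ).toReal := by
          rw [hh_def]
          dsimp only
          rw [Real.exp_sub, Real.exp_log hd]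
        rw [hexp_eq]
        calc D θ * ENNReal.ofReal (Real.exp (g θ) / (D θ).toReal)
            = ENNReal.ofReal ((D θ).toReal)
              * ENNReal.ofReal (Real.exp (g θ) / (D θ).toReal) := by
              rw [ENNReal.ofReal_toReal hlt.ne]
          _ = ENNReal.ofReal (Real.exp (g θ) / (D θ).toReal * (D θ).toReal) := by
              rw [← ENNReal.ofReal_mul ENNReal.toReal_nonneg, mul_comm]
          _ ≤ ENNReal.ofReal (Real.exp (g θ)) := by
              rw [div_mul_cancel₀ _ hd.ne']
    calc ∫⁻ θ, ENNReal.ofReal (Real.exp (h θ)) ∂ρ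
        = ∫⁻ θ, D θ * ENNReal.ofReal (Real.exp (h θ)) ∂μ := h1
      _ ≤ ∫⁻ θ, ENNReal.ofReal (Real.exp (g θ)) ∂μ := lintegral_mono_ae h2
      _ ≤ ENNReal.ofReal B := hbound
  -- integrability of exp ∘ h
  have hexp_int : Integrable (fun θ => Real.exp (h θ)) ρ := by
    refine ⟨(Real.measurable_exp.comp hh_meas).aestronglyMeasurable, ?_⟩
    rw [hasFiniteIntegral_iff_ofReal (ae_of_all _ fun θ => (Real.exp_pos _).le)]
    exact lt_of_le_of_lt hkey ENNReal.ofReal_lt_top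
  have hh_int : Integrable h ρ := hgi.sub hkl
  -- Jensen
  have hjensen : Real.exp (∫ θ, h θ ∂ρ) ≤ ∫ θ, Real.exp (h θ) ∂ρ := by
    have := convexOn_exp.map_integral_le continuous_exp.continuousOn isClosed_univ
      (Filter.Eventually.of_forall fun θ => Set.mem_univ (h θ)) hh_int
      (by exact hexp_int)
    simpa using this
  -- bound the integral of exp h
  have hle : ∫ θ, Real.exp (h θ) ∂ρ ≤ B := by
    rw [integral_eq_lintegral_of_nonneg_ae (ae_of_all _ fun θ => (Real.exp_pos _).le)
      (Real.measurable_exp.comp hh_meas).aestronglyMeasurable]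
    exact ENNReal.toReal_le_of_le_ofReal hB.le hkey
  have hlog : ∫ θ, h θ ∂ρ ≤ Real.log B :=
    (Real.le_log_iff_exp_le hB).2 (hjensen.trans hle)
  have hsplit : ∫ θ, h θ ∂ρ
      = ∫ θ, g θ ∂ρ - ∫ θ, Real.log ((D θ).toReal) ∂ρ := integral_sub hgi hkl
  rw [hsplit] at hlog
  linarith

/-- PAC-Bayes deviation inequality: for i.i.d. data `X₁, …, Xₙ` with common law `ν`,
a prior `μ` on a parameter space `Θ ⊆ ℝ^p`, and a function `f` with finite
exponential moments, with probability at least `1 - exp (-t)`, simultaneously for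
all posteriors `ρ ≪ μ`:
`(1/n) ∑ᵢ E_ρ[f(Xᵢ, θ)] ≤ E_ρ[log E_X exp (f(X, θ))] + (KL(ρ, μ) + t)/n`. -/
theorem pac_bayes_deviation {Ω 𝒳 : Type*} [MeasurableSpace Ω] [MeasurableSpace 𝒳]
    (P : Measure Ω) [IsProbabilityMeasure P]
    {p n : ℕ} (hn : 1 ≤ n)
    (T : Set (Fin p → ℝ)) (hT : MeasurableSet T)
    (μ : Measure T) [IsProbabilityMeasure μ]
    (ν : Measure 𝒳) [IsProbabilityMeasure ν]
    (X : Fin n → Ω → 𝒳) (hX : ∀ i, Measurable (X i))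
    (hindep : iIndepFun X P)
    (hident : ∀ i, Measure.map (X i) P = ν)
    (f : 𝒳 → T → ℝ) (hf : Measurable (Function.uncurry f))
    (hexp : ∀ θ : T, Integrable (fun x => Real.exp (f x θ)) ν)
    (t : ℝ) (ht : 0 < t) :
    ENNReal.ofReal (1 - Real.exp (-t)) ≤
      P {ω | ∀ ρ : Measure T, IsProbabilityMeasure ρ → ρ ≪ μ →
        (∀ i, Integrable (fun θ => f (X i ω) θ) ρ) →
        Integrable (fun θ : T => Real.log (∫ x, Real.exp (f x θ) ∂ν)) ρ →
        Integrable (fun θ => Real.log ((ρ.rnDeriv μ θ).toReal)) ρ →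
        (1 / (n : ℝ)) * ∑ i : Fin n, ∫ θ, f (X i ω) θ ∂ρ ≤
          (∫ θ : T, Real.log (∫ x, Real.exp (f x θ) ∂ν) ∂ρ) +
            ((∫ θ, Real.log ((ρ.rnDeriv μ θ).toReal) ∂ρ) + t) / n} := by
  classical
  -- notation
  set I : T → ℝ := fun θ => ∫ x, Real.exp (f x θ) ∂ν with hI_def
  set L : T → ℝ := fun θ => Real.log (I θ) with hL_def
  have hI_meas : Measurable I := by
    have hF : Measurable (fun q : T × 𝒳 => Real.exp (f q.2 q.1)) :=
      Real.measurable_exp.comp (hf.comp (measurable_snd.prodMk measurable_fst))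
    exact (hF.stronglyMeasurable.integral_prod_right').measurable
  have hL_meas : Measurable L := hI_meas.log
  have hIpos : ∀ θ, 0 < I θ := fun θ => integral_exp_pos (hexp θ)
  -- the exponential process
  set S : Ω → T → ℝ := fun ω θ => (∑ i : Fin n, f (X i ω) θ) - n * L θ with hS_def
  have hS_meas : Measurable (fun q : Ω × T => ENNReal.ofReal (Real.exp (S q.1 q.2))) := by
    have h1 : Measurable (fun q : Ω × T => S q.1 q.2) := by
      apply Measurable.sub
      · exact Finset.measurable_sum _ fun i _ =>
          hf.comp (((hX i).comp measurable_fst).prodMk measurable_snd)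
      · exact (hL_meas.comp measurable_snd).const_mul _
    exact ENNReal.measurable_ofReal.comp (Real.measurable_exp.comp h1)
  set Z : Ω → ENNReal := fun ω => ∫⁻ θ, ENNReal.ofReal (Real.exp (S ω θ)) ∂μ with hZ_def
  have hZ_meas : Measurable Z := hS_meas.lintegral_prod_right'
  -- expectation of Z is at most 1
  have hEZ : ∫⁻ ω, Z ω ∂P ≤ 1 := by
    have hswap : ∫⁻ ω, Z ω ∂P
        = ∫⁻ θ, ∫⁻ ω, ENNReal.ofReal (Real.exp (S ω θ)) ∂P ∂μ :=
      lintegral_lintegral_swap hS_meas.aemeasurable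
    have hinner : ∀ θ : T, ∫⁻ ω, ENNReal.ofReal (Real.exp (S ω θ)) ∂P = 1 := by
      intro θ
      have hgmeas : Measurable (fun x : 𝒳 => ENNReal.ofReal (Real.exp (f x θ))) :=
        ENNReal.measurable_ofReal.comp (Real.measurable_exp.comp
          (hf.comp (measurable_id.prodMk measurable_const)))
      have hYind : iIndepFun
          (fun i ω => ENNReal.ofReal (Real.exp (f (X i ω) θ))) P :=
        hindep.comp _ fun _ => hgmeas
      have hY_meas : ∀ i, Measurable (fun ω => ENNReal.ofReal (Real.exp (f (X i ω) θ))) :=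
        fun i => hgmeas.comp (hX i)
      have hprod : ∫⁻ ω, ∏ i : Fin n, ENNReal.ofReal (Real.exp (f (X i ω) θ)) ∂P
          = ∏ i : Fin n, ∫⁻ ω, ENNReal.ofReal (Real.exp (f (X i ω) θ)) ∂P :=
        aux_lintegral_prod P _ hY_meas hYind Finset.univ
      have hfactor : ∀ i : Fin n, ∫⁻ ω, ENNReal.ofReal (Real.exp (f (X i ω) θ)) ∂P
          = ENNReal.ofReal (I θ) := by
        intro i
        rw [← lintegral_map hgmeas (hX i), hident i]
        rw [← ofReal_integral_eq_lintegral_ofReal (hexp θ)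
          (ae_of_all _ fun x => (Real.exp_pos _).le)]
      have hsplitS : ∀ ω, ENNReal.ofReal (Real.exp (S ω θ))
          = ENNReal.ofReal (Real.exp (-(n * L θ)))
            * ∏ i : Fin n, ENNReal.ofReal (Real.exp (f (X i ω) θ)) := by
        intro ω
        rw [← ENNReal.ofReal_prod_of_nonneg (fun i _ => (Real.exp_pos _).le),
          ← ENNReal.ofReal_mul (Real.exp_pos _).le, ← Real.exp_sum, ← Real.exp_add]
        congr 2
        simp [hS_def, sub_eq_add_neg, add_comm]
      calc ∫⁻ ω, ENNReal.ofReal (Real.exp (S ω θ)) ∂P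
          = ∫⁻ ω, ENNReal.ofReal (Real.exp (-(n * L θ)))
              * ∏ i : Fin n, ENNReal.ofReal (Real.exp (f (X i ω) θ)) ∂P := by
            simp only [hsplitS]
        _ = ENNReal.ofReal (Real.exp (-(n * L θ)))
              * ∫⁻ ω, ∏ i : Fin n, ENNReal.ofReal (Real.exp (f (X i ω) θ)) ∂P :=
            lintegral_const_mul _ (Finset.measurable_prod _ fun i _ => hY_meas i)
        _ = ENNReal.ofReal (Real.exp (-(n * L θ))) * ENNReal.ofReal (I θ) ^ n := by
            rw [hprod]
            simp [hfactor]
        _ = 1 := by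
            rw [← ENNReal.ofReal_pow (hIpos θ).le, ← ENNReal.ofReal_mul (Real.exp_pos _).le]
            have : Real.exp (-(n * L θ)) * I θ ^ n = 1 := by
              have hIn : (I θ) ^ n = Real.exp (n * L θ) := by
                rw [hL_def]
                rw [Real.exp_nat_mul, Real.exp_log (hIpos θ)]
              rw [hIn, ← Real.exp_add]
              simp
            rw [this, ENNReal.ofReal_one]
    rw [hswap]
    simp [hinner]
  -- Markov's inequality
  set E : Set Ω := {ω | Z ω ≤ ENNReal.ofReal (Real.exp t)} with hE_def
  have hE_meas : MeasurableSet E := measurableSet_le hZ_meas measurable_const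
  have hEc : P Eᶜ ≤ ENNReal.ofReal (Real.exp (-t)) := by
    have hsub : Eᶜ ⊆ {ω | ENNReal.ofReal (Real.exp t) ≤ Z ω} := by
      intro ω hω
      simp only [Set.mem_compl_iff, hE_def, Set.mem_setOf_eq, not_le] at hω
      exact hω.le
    have hmarkov := mul_meas_ge_le_lintegral₀ (μ := P) hZ_meas.aemeasurable (ENNReal.ofReal (Real.exp t))
    have h1 : ENNReal.ofReal (Real.exp t) * P Eᶜ ≤ 1 :=
      le_trans (mul_le_mul_right (measure_mono hsub) _) (hmarkov.trans hEZ)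
    have h2 : P Eᶜ ≤ (ENNReal.ofReal (Real.exp t))⁻¹ := by
      rw [ENNReal.le_inv_iff_mul_le]
      rw [mul_comm] at h1
      exact h1
    rwa [← ENNReal.ofReal_inv_of_pos (Real.exp_pos t), ← Real.exp_neg] at h2
  have hPE : ENNReal.ofReal (1 - Real.exp (-t)) ≤ P E := by
    have h1 : (1 : ENNReal) ≤ P E + ENNReal.ofReal (Real.exp (-t)) := by
      calc (1 : ENNReal) = P E + P Eᶜ := (prob_add_prob_compl hE_meas).symm
        _ ≤ P E + ENNReal.ofReal (Real.exp (-t)) := add_le_add_right hEc _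
    have : ENNReal.ofReal (1 - Real.exp (-t)) ≤ 1 - ENNReal.ofReal (Real.exp (-t)) := by
      rw [ENNReal.ofReal_sub _ (Real.exp_pos _).le, ENNReal.ofReal_one]
    exact this.trans (tsub_le_iff_right.2 h1)
  -- inclusion of the good event into the target set
  refine hPE.trans (measure_mono ?_)
  intro ω hω
  intro ρ hρprob hρμ hint hintL hintKL
  have hn0 : (0:ℝ) < n := by positivity
  -- apply change of measure with g = S ω
  have hg_meas : Measurable (S ω) := by
    apply Measurable.sub
    · exact Finset.measurable_sum _ fun i _ =>
        hf.comp (measurable_const.prodMk measurable_id)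
    · exact hL_meas.const_mul _
  have hgi : Integrable (S ω) ρ := by
    apply Integrable.sub
    · exact integrable_finset_sum _ fun i _ => hint i
    · exact hintL.const_mul _
  have hcom := aux_change_of_measure μ ρ hρμ (S ω) hg_meas hgi hintKL
    (Real.exp_pos t) (by exact hω)
  rw [Real.log_exp] at hcom
  have hintegral : ∫ θ, S ω θ ∂ρ
      = (∑ i : Fin n, ∫ θ, f (X i ω) θ ∂ρ) - n * ∫ θ, L θ ∂ρ := by
    rw [hS_def]
    rw [integral_sub (integrable_finset_sum _ fun i _ => hint i) (hintL.const_mul _)]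
    rw [integral_finset_sum _ fun i _ => hint i, integral_const_mul]
  rw [hintegral] at hcom
  rw [one_div, inv_mul_le_iff₀ hn0]
  have hexpand : (n:ℝ) * ((∫ θ, L θ ∂ρ) +
      ((∫ θ, Real.log ((ρ.rnDeriv μ θ).toReal) ∂ρ) + t) / n)
      = n * (∫ θ, L θ ∂ρ) + ((∫ θ, Real.log ((ρ.rnDeriv μ θ).toReal) ∂ρ) + t) := by
    field_simp
  rw [hexpand]
  linarith
end

section
/- Let ψ(x) = x for x ∈ [−1,1] and ψ(x) = sign(x) for |x| > 1. For every real x, ψ(x) ≤ log(1 + x + x²). -/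
open Real

lemma quad_pos (x : ℝ) : 0 < 1 + x + x ^ 2 := by nlinarith [sq_nonneg (x+1), sq_nonneg x]

/-- The truncation function `ψ(x) = x` on `[-1,1]`, `ψ(x) = sign x` otherwise,
satisfies `ψ(x) ≤ log (1 + x + x²)` for all real `x`. -/
theorem trunc_le_log (x : ℝ) :
    (if |x| ≤ 1 then x else Real.sign x) ≤ Real.log (1 + x + x ^ 2) := by
  have hpos := quad_pos x
  split_ifs with h
  · rw [Real.le_log_iff_exp_le hpos]
    have hb := Real.exp_bound h (n := 2) (by norm_num)
    simp [Finset.sum_range_succ, Nat.factorial] at hb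
    have := abs_le.mp hb
    have hx2 : |x| ^ 2 = x ^ 2 := sq_abs x
    nlinarith [sq_nonneg x]
  · push_neg at h
    rcases lt_or_ge x 0 with hx | hx
    · rw [Real.sign_of_neg hx]
      have : (0:ℝ) ≤ Real.log (1 + x + x ^ 2) := by
        apply Real.log_nonneg
        have : x < -1 := by
          rcases abs_cases x with ⟨h1, _⟩ | ⟨h1, _⟩ <;> linarith
        nlinarith
      linarith
    · have hx1 : 1 < x := by
        rcases abs_cases x with ⟨h1, _⟩ | ⟨h1, _⟩ <;> linarith
      rw [Real.sign_of_pos (by linarith)]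
      rw [Real.le_log_iff_exp_le hpos]
      have : Real.exp 1 < 3 := Real.exp_one_lt_d9.trans (by norm_num)
      nlinarith
end

section
/- For any square-integrable random variable Z and any a > 0: E[log(1 + Z + Z²)] + a·E[min{1, Z²/6}] ≤ E[log(1 + Z + (1 + (7 + √6)(e^a − 1)/6)·Z²)]. -/
open MeasureTheory Real

lemma trunc_ptwise (a z : ℝ) (ha : 0 < a) :
    Real.log (1 + z + z ^ 2) + a * min 1 (z ^ 2 / 6) ≤
    Real.log (1 + z + (1 + (7 + Real.sqrt 6) * (Real.exp a - 1) / 6) * z ^ 2) := by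
  set s := Real.sqrt 6 with hs_def
  have hs : s ^ 2 = 6 := Real.sq_sqrt (by norm_num)
  have hs2 : 2 ≤ s := by nlinarith [Real.sqrt_nonneg 6]
  have hpos : 0 < 1 + z + z ^ 2 := by nlinarith [sq_nonneg (z + 1/2)]
  set m := min 1 (z ^ 2 / 6) with hm_def
  have hm0 : 0 ≤ m := le_min (by norm_num) (by positivity)
  have hm1 : m ≤ 1 := min_le_left _ _
  have hea : 0 < Real.exp a - 1 := by
    have := Real.add_one_lt_exp (x := a) ha.ne'
    linarith
  have hexp : Real.exp (a * m) ≤ 1 + m * (Real.exp a - 1) := by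
    have hcx := convexOn_exp.2 (Set.mem_univ 0) (Set.mem_univ a)
      (by linarith : (0:ℝ) ≤ 1 - m) hm0 (by ring)
    simp only [smul_eq_mul, mul_zero, zero_add, Real.exp_zero, mul_one] at hcx
    calc Real.exp (a * m) = Real.exp (m * a) := by rw [mul_comm]
    _ ≤ (1 - m) * 1 + m * Real.exp a := by rw [mul_one]; exact hcx
    _ = 1 + m * (Real.exp a - 1) := by ring
  have hkey : m * (1 + z + z ^ 2) ≤ (7 + s) / 6 * z ^ 2 := by
    rcases le_total (z ^ 2) 6 with h | h
    · have hm : m = z ^ 2 / 6 := min_eq_right (by linarith)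
      have hzle : z ≤ s := by nlinarith [sq_nonneg (z - s)]
      rw [hm]
      nlinarith [sq_nonneg z]
    · have hm : m = 1 := min_eq_left (by linarith)
      rw [hm]
      nlinarith [sq_nonneg (z - s)]
  have hmain : (1 + z + z ^ 2) * Real.exp (a * m) ≤
      1 + z + (1 + (7 + s) * (Real.exp a - 1) / 6) * z ^ 2 := by
    calc (1 + z + z ^ 2) * Real.exp (a * m)
        ≤ (1 + z + z ^ 2) * (1 + m * (Real.exp a - 1)) :=
          mul_le_mul_of_nonneg_left hexp hpos.le
      _ = (1 + z + z ^ 2) + m * (1 + z + z ^ 2) * (Real.exp a - 1) := by ring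
      _ ≤ (1 + z + z ^ 2) + (7 + s) / 6 * z ^ 2 * (Real.exp a - 1) := by nlinarith
      _ = 1 + z + (1 + (7 + s) * (Real.exp a - 1) / 6) * z ^ 2 := by ring
  have hlhs_pos : 0 < (1 + z + z ^ 2) * Real.exp (a * m) := by positivity
  calc Real.log (1 + z + z ^ 2) + a * m
      = Real.log ((1 + z + z ^ 2) * Real.exp (a * m)) := by
        rw [Real.log_mul hpos.ne' (Real.exp_ne_zero _), Real.log_exp]
    _ ≤ Real.log (1 + z + (1 + (7 + s) * (Real.exp a - 1) / 6) * z ^ 2) :=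
        Real.log_le_log hlhs_pos hmain

/-- For any square-integrable random variable `Z` and any `a > 0`:
`E[log (1 + Z + Z²)] + a E[min{1, Z²/6}]
  ≤ E[log (1 + Z + (1 + (7 + √6)(e^a − 1)/6) Z²)]`. -/
theorem trunc_log_exp_bound {Ω : Type*} [MeasurableSpace Ω] (μ : Measure Ω)
    [IsProbabilityMeasure μ] (Z : Ω → ℝ) (hZ : Measurable Z)
    (hZ2 : Integrable (fun ω => (Z ω) ^ 2) μ)
    (a : ℝ) (ha : 0 < a)
    (hlog1 : Integrable (fun ω => Real.log (1 + Z ω + (Z ω) ^ 2)) μ)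
    (hlog2 : Integrable (fun ω =>
      Real.log (1 + Z ω + (1 + (7 + Real.sqrt 6) * (Real.exp a - 1) / 6) * (Z ω) ^ 2)) μ) :
    (∫ ω, Real.log (1 + Z ω + (Z ω) ^ 2) ∂μ) +
        a * ∫ ω, min 1 ((Z ω) ^ 2 / 6) ∂μ ≤
      ∫ ω, Real.log (1 + Z ω + (1 + (7 + Real.sqrt 6) * (Real.exp a - 1) / 6) * (Z ω) ^ 2) ∂μ := by
  have hm_int : Integrable (fun ω => min 1 ((Z ω) ^ 2 / 6)) μ := by
    refine (hZ2.div_const 6).mono' ?_ ?_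
    · exact (measurable_const.min ((hZ.pow_const 2).div_const 6)).aestronglyMeasurable
    · filter_upwards with ω
      rw [Real.norm_eq_abs, abs_of_nonneg (le_min one_pos.le (by positivity))]
      exact min_le_right _ _
  have hsum : Integrable (fun ω => Real.log (1 + Z ω + (Z ω) ^ 2) +
      a * min 1 ((Z ω) ^ 2 / 6)) μ := hlog1.add (hm_int.const_mul a)
  have hmono := integral_mono hsum hlog2 (fun ω => trunc_ptwise a (Z ω) ha)
  rwa [integral_add hlog1 (hm_int.const_mul a), MeasureTheory.integral_const_mul] at hmono
end
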